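/- arXiv:1911.10345 — 4 statements merged into one kernel-verified Lean document; each statement's English description precedes it below -/
import Mathlib

section
/- Let 𝔊 be a measurable kernel assigning to each x ∈ ℝ^d a Borel measure 𝔊(x,·) on ℝ^d with sup_x 𝔊(x,ℝ^d) = ρ < 1, and let h : ℝ^d → [0,∞) be bounded and measurable. Then the series u(x) := Σ_{n=0}^∞ ∫_{ℝ^d} h(x−y) 𝔊^{*n}(x,dy) converges for every x, satisfies 0 ≤ u(x) ≤ (sup h)/(1−ρ), and u is a solution of the renewal-type equation u(x) = h(x) + ∫_{ℝ^d} u(x−z) 𝔊(x,dz) for all x ∈ ℝ^d. -/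
open MeasureTheory Filter Topology ProbabilityTheory
open scoped ENNReal

noncomputable section

/-- Iterated kernel convolutions: `𝔊^{*0}(x,·) = δ₀` and
`𝔊^{*n}(x,A) = ∫ 𝔊^{*(n-1)}(x,dy) 𝔊(x-y, A-y)`. -/
def iterConv {d : ℕ} (G : EuclideanSpace ℝ (Fin d) → Measure (EuclideanSpace ℝ (Fin d)))
    (x : EuclideanSpace ℝ (Fin d)) : ℕ → Measure (EuclideanSpace ℝ (Fin d))
  | 0 => Measure.dirac 0
  | n + 1 => (iterConv G x n).bind (fun y => (G (x - y)).map (· + y))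

/-- The renewal series `u(x) = Σ_{n=0}^∞ ∫ h(x-y) 𝔊^{*n}(x,dy)`. -/
def renewalSeries {d : ℕ} (G : EuclideanSpace ℝ (Fin d) → Measure (EuclideanSpace ℝ (Fin d)))
    (h : EuclideanSpace ℝ (Fin d) → ℝ) (x : EuclideanSpace ℝ (Fin d)) : ℝ :=
  ∑' n : ℕ, ∫ y, h (x - y) ∂ (iterConv G x n)

section Aux

variable {d : ℕ} (K : Kernel (EuclideanSpace ℝ (Fin d)) (EuclideanSpace ℝ (Fin d)))
  [IsFiniteKernel K]

omit [IsFiniteKernel K] in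
lemma aux_iterConv_succ (x : EuclideanSpace ℝ (Fin d)) (n : ℕ) :
    iterConv (fun z => K z) x (n + 1)
      = (iterConv (fun z => K z) x n).bind (fun y => (K (x - y)).map (· + y)) := rfl

lemma aux_step_meas (x : EuclideanSpace ℝ (Fin d)) :
    Measurable fun y : EuclideanSpace ℝ (Fin d) => (K (x - y)).map (· + y) := by
  apply Measure.measurable_of_measurable_coe
  intro A hA
  have hmap : ∀ y : EuclideanSpace ℝ (Fin d),
      (K (x - y)).map (· + y) A = K (x - y) ((· + y) ⁻¹' A) := fun y =>
    Measure.map_apply (measurable_add_const y) hA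
  simp_rw [hmap]
  set κ' : Kernel (EuclideanSpace ℝ (Fin d)) (EuclideanSpace ℝ (Fin d)) :=
    K.comap (fun y => x - y) (measurable_const.sub measurable_id)
  have ht : MeasurableSet {q : EuclideanSpace ℝ (Fin d) × EuclideanSpace ℝ (Fin d) |
      q.2 + q.1 ∈ A} := (measurable_snd.add measurable_fst) hA
  exact Kernel.measurable_kernel_prodMk_left (κ := κ') ht

lemma aux_meas_lint (x : EuclideanSpace ℝ (Fin d)) {g : EuclideanSpace ℝ (Fin d) → ℝ≥0∞}
    (hg : Measurable g) :
    Measurable fun y => ∫⁻ a, g (a + y) ∂ K (x - y) := by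
  set κ' : Kernel (EuclideanSpace ℝ (Fin d)) (EuclideanSpace ℝ (Fin d)) :=
    K.comap (fun y => x - y) (measurable_const.sub measurable_id)
  have : Measurable (Function.uncurry fun (y a : EuclideanSpace ℝ (Fin d)) => g (a + y)) :=
    hg.comp (measurable_snd.add measurable_fst)
  exact Measurable.lintegral_kernel_prod_right (κ := κ') this

lemma aux_peel (x : EuclideanSpace ℝ (Fin d)) (n : ℕ) {g : EuclideanSpace ℝ (Fin d) → ℝ≥0∞}
    (hg : Measurable g) :
    ∫⁻ y, g y ∂ iterConv (fun z => K z) x (n + 1)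
      = ∫⁻ y, ∫⁻ a, g (a + y) ∂ K (x - y) ∂ iterConv (fun z => K z) x n := by
  rw [aux_iterConv_succ, Measure.lintegral_bind (aux_step_meas K x).aemeasurable hg.aemeasurable]
  refine lintegral_congr fun y => ?_
  exact lintegral_map hg (measurable_add_const y)

lemma aux_first (n : ℕ) : ∀ {g : EuclideanSpace ℝ (Fin d) → ℝ≥0∞}, Measurable g →
    ∀ x : EuclideanSpace ℝ (Fin d),
    ∫⁻ y, g y ∂ iterConv (fun z => K z) x (n + 1)
      = ∫⁻ z, ∫⁻ w, g (w + z) ∂ iterConv (fun z' => K z') (x - z) n ∂ K x := by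
  induction n with
  | zero =>
    intro g hg x
    rw [aux_peel K x 0 hg]
    show ∫⁻ y, ∫⁻ a, g (a + y) ∂ K (x - y) ∂ Measure.dirac 0 = _
    rw [lintegral_dirac]
    simp only [add_zero, sub_zero]
    refine lintegral_congr fun z => ?_
    show g z = ∫⁻ w, g (w + z) ∂ Measure.dirac 0
    rw [lintegral_dirac, zero_add]
  | succ n IH =>
    intro g hg x
    rw [aux_peel K x (n + 1) hg, IH (aux_meas_lint K x hg) x]
    refine lintegral_congr fun z => ?_
    rw [aux_peel K (x - z) n (g := fun w => g (w + z)) (hg.comp (measurable_add_const z))]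
    refine lintegral_congr fun w => ?_
    have h1 : x - (w + z) = x - z - w := by abel
    rw [h1]
    refine lintegral_congr fun a => ?_
    rw [add_assoc]

end Aux

/-- Theorem 2.1 of the paper, analytic form.  If `𝔊` is a measurable kernel
on `ℝ^d` with `sup_x 𝔊(x,ℝ^d) = ρ < 1` and `h : ℝ^d → [0,∞)` is bounded (by `M`) and
measurable, then the series `u(x) := Σ_n ∫ h(x-y) 𝔊^{*n}(x,dy)` converges for every `x`,
satisfies `0 ≤ u(x) ≤ M/(1-ρ)`, and solves the renewal-type equation
`u(x) = h(x) + ∫ u(x-z) 𝔊(x,dz)`. -/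
theorem renewal_series_solves_renewal_equation
    {d : ℕ} (𝔊 : Kernel (EuclideanSpace ℝ (Fin d)) (EuclideanSpace ℝ (Fin d)))
    (ρ : ℝ) (hρ0 : 0 ≤ ρ) (hρ1 : ρ < 1)
    (hsup : (⨆ x, 𝔊 x Set.univ) = ENNReal.ofReal ρ)
    (h : EuclideanSpace ℝ (Fin d) → ℝ) (hmeas : Measurable h)
    (hpos : ∀ x, 0 ≤ h x) (M : ℝ) (hM : ∀ x, h x ≤ M) :
    (∀ x, Summable fun n : ℕ => ∫ y, h (x - y) ∂ (iterConv (fun z => 𝔊 z) x n)) ∧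
    (∀ x, 0 ≤ renewalSeries (fun z => 𝔊 z) h x) ∧
    (∀ x, renewalSeries (fun z => 𝔊 z) h x ≤ M / (1 - ρ)) ∧
    (∀ x, renewalSeries (fun z => 𝔊 z) h x
        = h x + ∫ z, renewalSeries (fun w => 𝔊 w) h (x - z) ∂ (𝔊 x)) := by
  have hGb : ∀ z, 𝔊 z Set.univ ≤ ENNReal.ofReal ρ := fun z =>
    hsup ▸ le_iSup (fun x => 𝔊 x Set.univ) z
  haveI : IsFiniteKernel 𝔊 := ⟨⟨ENNReal.ofReal ρ, ENNReal.ofReal_lt_top, hGb⟩⟩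
  set f : EuclideanSpace ℝ (Fin d) → ℝ≥0∞ := fun t => ENNReal.ofReal (h t) with hf
  have fm : Measurable f := hmeas.ennreal_ofReal
  set L : ℕ → EuclideanSpace ℝ (Fin d) → ℝ≥0∞ :=
    fun n v => ∫⁻ y, f (v - y) ∂ iterConv (fun z => 𝔊 z) v n with hL
  have hM0 : 0 ≤ M := le_trans (hpos 0) (hM 0)
  set r : ℝ≥0∞ := ENNReal.ofReal ρ with hr
  have hr1 : r < 1 := ENNReal.ofReal_lt_one.2 hρ1
  have hL0 : ∀ v, L 0 v = f v := by
    intro v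
    show ∫⁻ y, f (v - y) ∂ Measure.dirac 0 = f v
    rw [lintegral_dirac, sub_zero]
  have hLsucc : ∀ n v, L (n + 1) v = ∫⁻ z, L n (v - z) ∂ 𝔊 v := by
    intro n v
    have := aux_first 𝔊 n (g := fun y => f (v - y)) (fm.comp (measurable_const.sub measurable_id)) v
    rw [hL]
    simp only at this ⊢
    rw [this]
    refine lintegral_congr fun z => lintegral_congr fun w => ?_
    have : v - (w + z) = v - z - w := by abel
    rw [this]
  have hLmeas : ∀ n, Measurable (L n) := by
    intro n
    induction n with
    | zero =>
      have : L 0 = f := funext hL0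
      rw [this]; exact fm
    | succ n ih =>
      have : L (n + 1) = fun v => ∫⁻ z, L n (v - z) ∂ 𝔊 v := funext (hLsucc n)
      rw [this]
      exact Measurable.lintegral_kernel_prod_right (κ := 𝔊)
        (ih.comp (measurable_fst.sub measurable_snd))
  have hLb : ∀ n v, L n v ≤ ENNReal.ofReal M * r ^ n := by
    intro n
    induction n with
    | zero =>
      intro v
      rw [hL0]
      simpa using ENNReal.ofReal_le_ofReal (hM v)
    | succ n ih =>
      intro v
      rw [hLsucc]
      calc ∫⁻ z, L n (v - z) ∂ 𝔊 v ≤ ∫⁻ _, ENNReal.ofReal M * r ^ n ∂ 𝔊 v :=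
            lintegral_mono fun z => ih (v - z)
        _ = ENNReal.ofReal M * r ^ n * 𝔊 v Set.univ := lintegral_const _
        _ ≤ ENNReal.ofReal M * r ^ n * r := mul_le_mul_right (hGb v) _
        _ = ENNReal.ofReal M * r ^ (n + 1) := by rw [pow_succ]; ring
  have hLlt : ∀ n v, L n v < ∞ := fun n v =>
    lt_of_le_of_lt (hLb n v) (ENNReal.mul_lt_top ENNReal.ofReal_lt_top
      (ENNReal.pow_lt_top ENNReal.ofReal_lt_top))
  set U : EuclideanSpace ℝ (Fin d) → ℝ≥0∞ := fun v => ∑' n, L n v with hU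
  have hUb : ∀ v, U v ≤ ENNReal.ofReal M * (1 - r)⁻¹ := by
    intro v
    calc U v ≤ ∑' n, ENNReal.ofReal M * r ^ n := ENNReal.tsum_le_tsum fun n => hLb n v
      _ = ENNReal.ofReal M * ∑' n, r ^ n := ENNReal.tsum_mul_left
      _ = ENNReal.ofReal M * (1 - r)⁻¹ := by rw [ENNReal.tsum_geometric]
  have hcfin : ENNReal.ofReal M * (1 - r)⁻¹ < ∞ :=
    ENNReal.mul_lt_top ENNReal.ofReal_lt_top
      (ENNReal.inv_lt_top.2 (tsub_pos_of_lt hr1))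
  have hUne : ∀ v, U v ≠ ∞ := fun v => (lt_of_le_of_lt (hUb v) hcfin).ne
  have hUmeas : Measurable U := Measurable.ennreal_tsum hLmeas
  have hInt : ∀ n x, ∫ y, h (x - y) ∂ iterConv (fun z => 𝔊 z) x n = (L n x).toReal := by
    intro n x
    rw [integral_eq_lintegral_of_nonneg_ae (ae_of_all _ fun y => hpos (x - y))
      ((hmeas.comp (measurable_const.sub measurable_id)).aestronglyMeasurable)]
  have hLbR : ∀ n x, (L n x).toReal ≤ M * ρ ^ n := by
    intro n x
    refine ENNReal.toReal_le_of_le_ofReal (by positivity) ?_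
    rw [ENNReal.ofReal_mul hM0, ENNReal.ofReal_pow hρ0]
    exact hLb n x
  have hsummable : ∀ x, Summable fun n : ℕ =>
      ∫ y, h (x - y) ∂ iterConv (fun z => 𝔊 z) x n := by
    intro x
    refine Summable.of_nonneg_of_le (fun n => ?_) (fun n => ?_)
      ((summable_geometric_of_lt_one hρ0 hρ1).mul_left M)
    · rw [hInt n x]; exact ENNReal.toReal_nonneg
    · rw [hInt n x]; exact hLbR n x
  have hu : ∀ x, renewalSeries (fun z => 𝔊 z) h x = (U x).toReal := by
    intro x
    have h1 : renewalSeries (fun z => 𝔊 z) h x = ∑' n, (L n x).toReal :=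
      tsum_congr fun n => hInt n x
    rw [h1]
    exact (ENNReal.tsum_toReal_eq fun n => (hLlt n x).ne).symm
  refine ⟨hsummable, fun x => by rw [hu]; exact ENNReal.toReal_nonneg, ?_, ?_⟩
  · intro x
    rw [hu, div_eq_mul_inv]
    calc (U x).toReal ≤ (ENNReal.ofReal M * (1 - r)⁻¹).toReal :=
          ENNReal.toReal_mono hcfin.ne (hUb x)
      _ = M * (1 - ρ)⁻¹ := by
          rw [ENNReal.toReal_mul, ENNReal.toReal_ofReal hM0, ENNReal.toReal_inv]
          congr 2
          rw [hr, show (1 : ℝ≥0∞) = ENNReal.ofReal 1 from (ENNReal.ofReal_one).symm,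
            ← ENNReal.ofReal_sub _ hρ0, ENNReal.toReal_ofReal (by linarith)]
  · intro x
    have key : U x = f x + ∫⁻ z, U (x - z) ∂ 𝔊 x := by
      have h1 : U x = L 0 x + ∑' n, L (n + 1) x := tsum_eq_zero_add' ENNReal.summable
      rw [h1, hL0]
      congr 1
      calc ∑' n, L (n + 1) x = ∑' n, ∫⁻ z, L n (x - z) ∂ 𝔊 x := by
            exact tsum_congr fun n => hLsucc n x
        _ = ∫⁻ z, ∑' n, L n (x - z) ∂ 𝔊 x :=
            (lintegral_tsum fun n =>
              ((hLmeas n).comp (measurable_const.sub measurable_id)).aemeasurable).symm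
    have hfin : ∫⁻ z, U (x - z) ∂ 𝔊 x ≠ ∞ := by
      refine (lt_of_le_of_lt (lintegral_mono fun z => hUb (x - z)) ?_).ne
      rw [lintegral_const]
      exact ENNReal.mul_lt_top hcfin (measure_lt_top (𝔊 x) Set.univ)
    have hIntU : ∫ z, renewalSeries (fun w => 𝔊 w) h (x - z) ∂ 𝔊 x
        = (∫⁻ z, U (x - z) ∂ 𝔊 x).toReal := by
      have hsm : AEStronglyMeasurable
          (fun z => renewalSeries (fun w => 𝔊 w) h (x - z)) (𝔊 x) := by
        have : (fun z => renewalSeries (fun w => 𝔊 w) h (x - z))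
            = fun z => (U (x - z)).toReal := funext fun z => hu (x - z)
        rw [this]
        exact ((ENNReal.measurable_toReal.comp hUmeas).comp
          (measurable_const.sub measurable_id)).aestronglyMeasurable
      rw [integral_eq_lintegral_of_nonneg_ae (ae_of_all _ fun z => by
        rw [hu]; exact ENNReal.toReal_nonneg) hsm]
      congr 1
      refine lintegral_congr fun z => ?_
      rw [hu, ENNReal.ofReal_toReal (hUne (x - z))]
    rw [hu, key, ENNReal.toReal_add ENNReal.ofReal_ne_top hfin,
      ENNReal.toReal_ofReal (hpos x), hIntU]

end
end

section
/- Let F be a weakly subexponential probability distribution on ℝ^d_+, and let φ : ℝ^d_+ → ℝ^d_+ be increasing in each coordinate with φ(x)⁰ → ∞ and (x−φ(x))⁰ → ∞ as x⁰ → ∞, such that F̄ is φ-insensitive. Then ∫_{{y ∈ ℝ^d_+ : φ(x) < y < x−φ(x)}} F̄(x−y) F(dy) = o(F̄(x)) as x⁰ → ∞. -/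
open MeasureTheory Filter Topology
open scoped ENNReal

noncomputable section

/-- The filter of `x⁰ = min_{1≤i≤d} x_i → ∞`. -/
def minAtTop (d : ℕ) : Filter (EuclideanSpace ℝ (Fin d)) :=
  Filter.comap (fun x => ⨅ i, x i) Filter.atTop

/-- The multivariate tail `F̄(x) = 1 - F((-∞,x])` (componentwise order). -/
def mvTail {d : ℕ} (F : Measure (EuclideanSpace ℝ (Fin d)))
    (x : EuclideanSpace ℝ (Fin d)) : ℝ :=
  (F {y | ¬ ∀ i, y i ≤ x i}).toReal

/-- Convolution of two measures (distribution of the sum of independent vectors). -/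
def mvConv {d : ℕ} (F G : Measure (EuclideanSpace ℝ (Fin d))) :
    Measure (EuclideanSpace ℝ (Fin d)) :=
  (F.prod G).map (fun p => p.1 + p.2)

/-- multivariate middle-region estimate, used for `K₂₃` and `J₃` in the
proofs of Lemma 3.8 and Theorem 3.5 of the paper.  If `F` is weakly subexponential on
`ℝ^d_+` and `F̄` is `φ`-insensitive for a componentwise increasing `φ` with `φ(x)⁰ → ∞`
and `(x-φ(x))⁰ → ∞`, then
`∫_{φ(x) < y < x-φ(x)} F̄(x-y) F(dy) = o(F̄(x))` as `x⁰ → ∞`. -/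
theorem middle_region_integral_is_little_o
    {d : ℕ} (hd : 0 < d) (F : Measure (EuclideanSpace ℝ (Fin d)))
    [IsProbabilityMeasure F]
    (hsupp : F {x | ¬ ∀ i, 0 < x i} = 0)
    (hFpos : ∀ x, 0 < mvTail F x)
    (hsubexp : Filter.Tendsto (fun x => mvTail (mvConv F F) x / mvTail F x)
      (minAtTop d) (nhds 2))
    (φ : EuclideanSpace ℝ (Fin d) → EuclideanSpace ℝ (Fin d))
    (hφpos : ∀ x, (∀ i, 0 < x i) → ∀ i, 0 < φ x i)
    (hφmono : ∀ x y, (∀ i, x i ≤ y i) → ∀ i, φ x i ≤ φ y i)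
    (hφinf : Filter.Tendsto (fun x => ⨅ i, φ x i) (minAtTop d) Filter.atTop)
    (hφinf' : Filter.Tendsto (fun x => ⨅ i, (x i - φ x i)) (minAtTop d) Filter.atTop)
    (hinsens : Filter.Tendsto (fun x => mvTail F (x + φ x) / mvTail F x)
      (minAtTop d) (nhds 1)) :
    Filter.Tendsto
      (fun x =>
        (∫ y in {y | (∀ i, φ x i < y i) ∧ ∀ i, y i < x i - φ x i},
            mvTail F (x - y) ∂F) / mvTail F x)
      (minAtTop d) (nhds 0) := by
  classical
  haveI : Nonempty (Fin d) := ⟨⟨0, hd⟩⟩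
  let E := EuclideanSpace ℝ (Fin d)
  have coord_sub : ∀ (a b : EuclideanSpace ℝ (Fin d)) (i : Fin d), (a - b) i = a i - b i :=
    fun a b i => by simp
  have coord_add : ∀ (a b : EuclideanSpace ℝ (Fin d)) (i : Fin d), (a + b) i = a i + b i :=
    fun a b i => by simp
  have mcoord : ∀ i : Fin d, Measurable fun z : E => z i := fun i => (measurable_pi_apply i).comp (WithLp.measurable_ofLp _ _)
  -- low and tail sets
  have mlow : ∀ v : E, MeasurableSet {z : E | ∀ i, z i ≤ v i} := by
    intro v
    have : {z : E | ∀ i, z i ≤ v i} = ⋂ i, {z : E | z i ≤ v i} := by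
      ext z; simp
    rw [this]
    exact MeasurableSet.iInter fun i => measurableSet_le (mcoord i) measurable_const
  have mtail : ∀ v : E, MeasurableSet {z : E | ¬ ∀ i, z i ≤ v i} := by
    intro v
    have : {z : E | ¬ ∀ i, z i ≤ v i} = {z : E | ∀ i, z i ≤ v i}ᶜ := rfl
    rw [this]; exact (mlow v).compl
  have mmid : ∀ x : E, MeasurableSet {y : E | (∀ i, φ x i < y i) ∧ ∀ i, y i < x i - φ x i} := by
    intro x
    have h1 : {y : E | ∀ i, φ x i < y i} = ⋂ i, {y : E | φ x i < y i} := by ext z; simp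
    have h2 : {y : E | ∀ i, y i < x i - φ x i} = ⋂ i, {y : E | y i < x i - φ x i} := by
      ext z; simp
    have h3 : {y : E | (∀ i, φ x i < y i) ∧ ∀ i, y i < x i - φ x i}
        = {y : E | ∀ i, φ x i < y i} ∩ {y : E | ∀ i, y i < x i - φ x i} := rfl
    rw [h3, h1, h2]
    exact (MeasurableSet.iInter fun i => measurableSet_lt measurable_const (mcoord i)).inter
      (MeasurableSet.iInter fun i => measurableSet_lt (mcoord i) measurable_const)
  have mG : MeasurableSet {z : E | ∀ i, 0 < z i} := by
    have : {z : E | ∀ i, 0 < z i} = ⋂ i, {z : E | 0 < z i} := by ext z; simp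
    rw [this]
    exact MeasurableSet.iInter fun i => measurableSet_lt measurable_const (mcoord i)
  have hGnull : F {z : E | ∀ i, 0 < z i}ᶜ = 0 := hsupp
  -- Step A : F (low (φ x)) → 1
  have hboxA : Filter.Tendsto (fun M : ℝ => F {z : E | ∀ i, z i ≤ M}) Filter.atTop
      (nhds 1) := by
    have hmono : Monotone fun M : ℝ => {z : E | ∀ i, z i ≤ M} := by
      intro a b hab z hz i; exact (hz i).trans hab
    have hunion : (⋃ M : ℝ, {z : E | ∀ i, z i ≤ M}) = Set.univ := by
      ext z
      simp only [Set.mem_iUnion, Set.mem_univ, iff_true, Set.mem_setOf_eq]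
      refine ⟨⨆ i, z i, fun i => ?_⟩
      exact le_ciSup (Set.Finite.bddAbove (Set.finite_range _)) i
    have h := tendsto_measure_iUnion_atTop (μ := F) hmono
    rw [hunion, measure_univ] at h
    exact h
  have hbox : Filter.Tendsto (fun x : E => (F {z : E | ∀ i, z i ≤ φ x i}).toReal)
      (minAtTop d) (nhds 1) := by
    have h1 : Filter.Tendsto (fun x : E => F {z : E | ∀ i, z i ≤ (⨅ j, φ x j)})
        (minAtTop d) (nhds 1) := hboxA.comp hφinf
    have h1' : Filter.Tendsto (fun x : E => (F {z : E | ∀ i, z i ≤ (⨅ j, φ x j)}).toReal)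
        (minAtTop d) (nhds 1) := by
      have h2 := (ENNReal.tendsto_toReal (a := 1) (by norm_num)).comp h1
      simpa [Function.comp_def] using h2
    have hlow : ∀ x : E, (F {z : E | ∀ i, z i ≤ (⨅ j, φ x j)}).toReal
        ≤ (F {z : E | ∀ i, z i ≤ φ x i}).toReal := by
      intro x
      refine ENNReal.toReal_mono (measure_ne_top F _) (measure_mono ?_)
      intro z hz i
      exact (hz i).trans (ciInf_le (Set.Finite.bddBelow (Set.finite_range _)) i)
    have hup : ∀ x : E, (F {z : E | ∀ i, z i ≤ φ x i}).toReal ≤ 1 := by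
      intro x
      have h3 : (F {z : E | ∀ i, z i ≤ φ x i}) ≤ 1 := prob_le_one
      simpa using ENNReal.toReal_mono (by norm_num) h3
    exact tendsto_of_tendsto_of_tendsto_of_le_of_le' h1' tendsto_const_nhds
      (Filter.Eventually.of_forall hlow) (Filter.Eventually.of_forall hup)
  -- Step B : eventual upper bound
  have hev : ∀ᶠ x in minAtTop d,
      (∫ y in {y | (∀ i, φ x i < y i) ∧ ∀ i, y i < x i - φ x i},
          mvTail F (x - y) ∂F) / mvTail F x
        ≤ mvTail (mvConv F F) x / mvTail F x - 2 * (F {z : E | ∀ i, z i ≤ φ x i}).toReal := by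
    have hev0 : ∀ᶠ x in minAtTop d, (0:ℝ) ≤ ⨅ i, (x i - φ x i) :=
      hφinf'.eventually (Filter.eventually_ge_atTop 0)
    filter_upwards [hev0] with x hx0
    have hφle : ∀ i, φ x i ≤ x i := by
      intro i
      have h4 := ciInf_le (f := fun i => x i - φ x i)
        (Set.Finite.bddBelow (Set.finite_range _)) i
      have := hx0.trans h4
      linarith
    -- sets
    set G : Set E := {z : E | ∀ i, 0 < z i} with hG
    set lowφ : Set E := {z : E | ∀ i, z i ≤ φ x i} with hlowφ
    set tailx : Set E := {z : E | ¬ ∀ i, z i ≤ x i} with htailx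
    set mid : Set E := {y : E | (∀ i, φ x i < y i) ∧ ∀ i, y i < x i - φ x i} with hmid
    set S : Set (E × E) := {p : E × E | ¬ ∀ i, p.1 i + p.2 i ≤ x i} with hS
    have mS : MeasurableSet S := by
      have h5 : S = (⋂ i, {p : E × E | p.1 i + p.2 i ≤ x i})ᶜ := by
        ext p; simp [hS]
      rw [h5]
      exact (MeasurableSet.iInter fun i => measurableSet_le
        (((mcoord i).comp measurable_fst).add ((mcoord i).comp measurable_snd))
        measurable_const).compl
    set A₁ : Set (E × E) := (G ∩ lowφ) ×ˢ tailx with hA₁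
    set A₂ : Set (E × E) := {p : E × E | p.1 ∈ mid} ∩ S with hA₂
    set A₃ : Set (E × E) := tailx ×ˢ (G ∩ lowφ) with hA₃
    have mA₁ : MeasurableSet A₁ := (mG.inter (mlow _)).prod (mtail _)
    have mA₂ : MeasurableSet A₂ := (measurable_fst (mmid x)).inter mS
    have mA₃ : MeasurableSet A₃ := (mtail _).prod (mG.inter (mlow _))
    -- inclusions into S
    have hsub₁ : A₁ ⊆ S := by
      rintro ⟨y, z⟩ ⟨⟨hyG, _⟩, hz⟩
      simp only [htailx, Set.mem_setOf_eq, not_forall, not_le] at hz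
      obtain ⟨i, hi⟩ := hz
      simp only [hS, Set.mem_setOf_eq, not_forall, not_le]
      exact ⟨i, by have := hyG i; linarith⟩
    have hsub₂ : A₂ ⊆ S := Set.inter_subset_right
    have hsub₃ : A₃ ⊆ S := by
      rintro ⟨y, z⟩ ⟨hy, hzG, _⟩
      simp only [htailx, Set.mem_setOf_eq, not_forall, not_le] at hy
      obtain ⟨i, hi⟩ := hy
      simp only [hS, Set.mem_setOf_eq, not_forall, not_le]
      exact ⟨i, by have := hzG i; linarith⟩
    -- disjointness
    have hd₁₂ : Disjoint A₁ A₂ := by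
      rw [Set.disjoint_left]
      rintro ⟨y, z⟩ ⟨⟨_, hylow⟩, _⟩ ⟨hymid, _⟩
      have h1 := hylow ⟨0, hd⟩
      have h2 := hymid.1 ⟨0, hd⟩
      simp only [hlowφ, Set.mem_setOf_eq] at h1
      linarith
    have hd₁₃ : Disjoint A₁ A₃ := by
      rw [Set.disjoint_left]
      rintro ⟨y, z⟩ ⟨⟨_, hylow⟩, _⟩ ⟨hy, _⟩
      exact hy fun i => (hylow i).trans (hφle i)
    have hd₂₃ : Disjoint A₂ A₃ := by
      rw [Set.disjoint_left]
      rintro ⟨y, z⟩ ⟨hymid, hyS⟩ ⟨_, _, hzlow⟩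
      simp only [hS, Set.mem_setOf_eq, not_forall, not_le] at hyS
      obtain ⟨i, hi⟩ := hyS
      have h1 := hymid.2 i
      have h2 := hzlow i
      linarith
    -- measure computations
    have hGlow : F (G ∩ lowφ) = F lowφ := by
      rw [Set.inter_comm]; exact measure_inter_conull hGnull
    have hA₁m : F.prod F A₁ = F lowφ * F tailx := by
      rw [hA₁, Measure.prod_prod, hGlow]
    have hA₃m : F.prod F A₃ = F tailx * F lowφ := by
      rw [hA₃, Measure.prod_prod, hGlow]
    -- middle term
    have hA₂m : F.prod F A₂ = ∫⁻ y in mid, F {z : E | ¬ ∀ i, z i ≤ x i - y i} ∂F := by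
      rw [Measure.prod_apply mA₂, ← lintegral_indicator (mmid x)]
      congr 1
      funext y
      by_cases hy : y ∈ mid
      · rw [Set.indicator_of_mem hy]
        congr 1
        ext z
        simp only [Set.mem_preimage, hA₂, Set.mem_inter_iff, Set.mem_setOf_eq, hS]
        constructor
        · rintro ⟨_, h⟩ hall
          exact h fun i => by have := hall i; linarith
        · intro h
          exact ⟨hy, fun hall => h fun i => by have := hall i; linarith⟩
      · rw [Set.indicator_of_notMem hy]
        have h6 : Prod.mk y ⁻¹' A₂ = ∅ := by
          ext z
          simp only [Set.mem_preimage, hA₂, Set.mem_inter_iff, Set.mem_setOf_eq,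
            Set.mem_empty_iff_false, iff_false]
          rintro ⟨h, _⟩; exact hy h
        rw [h6, measure_empty]
    -- union bound
    have hsum : F.prod F A₁ + F.prod F A₂ + F.prod F A₃ ≤ F.prod F S := by
      have h1 : F.prod F ((A₁ ∪ A₂) ∪ A₃) = F.prod F A₁ + F.prod F A₂ + F.prod F A₃ := by
        rw [measure_union (Set.disjoint_union_left.mpr ⟨hd₁₃, hd₂₃⟩) mA₃,
          measure_union hd₁₂ mA₂]
      rw [← h1]
      exact measure_mono (Set.union_subset (Set.union_subset hsub₁ hsub₂) hsub₃)
    -- measurability of the tail integrand in ENNReal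
    have hTf : Measurable fun y : E => F {z : E | ¬ ∀ i, z i ≤ x i - y i} := by
      have mU : MeasurableSet {p : E × E | ¬ ∀ i, p.2 i ≤ x i - p.1 i} := by
        have h7 : {p : E × E | ¬ ∀ i, p.2 i ≤ x i - p.1 i}
            = (⋂ i, {p : E × E | p.2 i ≤ x i - p.1 i})ᶜ := by
          ext p; simp
        rw [h7]
        exact (MeasurableSet.iInter fun i => measurableSet_le
          ((mcoord i).comp measurable_snd)
          (measurable_const.sub ((mcoord i).comp measurable_fst))).compl
      exact measurable_measure_prodMk_left (ν := F) mU
    -- the real integral equals toReal of the lintegral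
    have hInt : (∫ y in mid, mvTail F (x - y) ∂F)
        = (∫⁻ y in mid, F {z : E | ¬ ∀ i, z i ≤ x i - y i} ∂F).toReal := by
      have heq : ∀ y : E, mvTail F (x - y)
          = (F {z : E | ¬ ∀ i, z i ≤ x i - y i}).toReal := by
        intro y
        have hsub : ∀ i, (x - y) i = x i - y i := coord_sub x y
        have hset : {z : E | ¬ ∀ i, z i ≤ (x - y) i} = {z : E | ¬ ∀ i, z i ≤ x i - y i} := by
          ext z; simp only [Set.mem_setOf_eq, hsub]
        show (F {z : E | ¬ ∀ i, z i ≤ (x - y) i}).toReal = _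
        rw [hset]
      calc (∫ y in mid, mvTail F (x - y) ∂F)
          = ∫ y in mid, (F {z : E | ¬ ∀ i, z i ≤ x i - y i}).toReal ∂F :=
            integral_congr_ae (Filter.Eventually.of_forall fun y => heq y)
        _ = (∫⁻ y in mid, F {z : E | ¬ ∀ i, z i ≤ x i - y i} ∂F).toReal := by
            refine integral_toReal hTf.aemeasurable ?_
            exact Filter.Eventually.of_forall fun y => measure_lt_top F _
    -- convolution tail
    have hconv : mvTail (mvConv F F) x = ((F.prod F) S).toReal := by
      have hadd : ∀ (p : E × E) (i : Fin d), (p.1 + p.2) i = p.1 i + p.2 i :=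
        fun p i => coord_add p.1 p.2 i
      have hpre : (fun p : E × E => p.1 + p.2) ⁻¹' {z : E | ¬ ∀ i, z i ≤ x i} = S := by
        ext p
        simp only [Set.mem_preimage, Set.mem_setOf_eq, hS, hadd]
      show ((mvConv F F) {z : E | ¬ ∀ i, z i ≤ x i}).toReal = _
      rw [mvConv, Measure.map_apply measurable_add (mtail x), hpre]
    -- finiteness
    have hfin : ∀ B : Set (E × E), F.prod F B ≠ ⊤ := fun B => measure_ne_top _ _
    -- toReal of the inequality
    have hsumR : (F.prod F A₁).toReal + (F.prod F A₂).toReal + (F.prod F A₃).toReal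
        ≤ ((F.prod F) S).toReal := by
      have h8 := ENNReal.toReal_mono (hfin S) hsum
      rw [ENNReal.toReal_add (by finiteness) (hfin A₃),
        ENNReal.toReal_add (hfin A₁) (hfin A₂)] at h8
      exact h8
    have hA₁R : (F.prod F A₁).toReal = (F lowφ).toReal * mvTail F x := by
      rw [hA₁m, ENNReal.toReal_mul]; rfl
    have hA₃R : (F.prod F A₃).toReal = mvTail F x * (F lowφ).toReal := by
      rw [hA₃m, ENNReal.toReal_mul]; rfl
    have hA₂R : (∫ y in mid, mvTail F (x - y) ∂F) = (F.prod F A₂).toReal := by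
      rw [hInt, hA₂m]
    -- assemble
    have hT : (0:ℝ) < mvTail F x := hFpos x
    have key : (∫ y in mid, mvTail F (x - y) ∂F)
        ≤ mvTail (mvConv F F) x - 2 * (F lowφ).toReal * mvTail F x := by
      rw [hA₂R, hconv]
      nlinarith [hsumR, hA₁R, hA₃R]
    have hdiv : (∫ y in mid, mvTail F (x - y) ∂F) / mvTail F x
        ≤ (mvTail (mvConv F F) x - 2 * (F lowφ).toReal * mvTail F x) / mvTail F x := by
      gcongr
    have heq2 : (mvTail (mvConv F F) x - 2 * (F lowφ).toReal * mvTail F x) / mvTail F x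
        = mvTail (mvConv F F) x / mvTail F x - 2 * (F lowφ).toReal := by
      rw [sub_div, mul_div_assoc, div_self (ne_of_gt hT), mul_one]
    rw [heq2] at hdiv
    exact hdiv
  -- Step C : squeeze
  have hlimit : Filter.Tendsto
      (fun x : E => mvTail (mvConv F F) x / mvTail F x
        - 2 * (F {z : E | ∀ i, z i ≤ φ x i}).toReal) (minAtTop d) (nhds 0) := by
    have h9 := hsubexp.sub (hbox.const_mul 2)
    norm_num at h9
    exact h9
  have hlow : ∀ᶠ x in minAtTop d, (0:ℝ) ≤
      (∫ y in {y | (∀ i, φ x i < y i) ∧ ∀ i, y i < x i - φ x i},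
          mvTail F (x - y) ∂F) / mvTail F x := by
    refine Filter.Eventually.of_forall fun x => ?_
    refine div_nonneg ?_ (hFpos x).le
    exact integral_nonneg fun y => ENNReal.toReal_nonneg
  exact tendsto_of_tendsto_of_tendsto_of_le_of_le' tendsto_const_nhds hlimit hlow hev

end
end

section
/- Let d = 2 and for i = 1, 2 let F_i be the probability distribution on [0,∞) with tail F̄_i(z) = c_i z^{−1−α_i} for z ≥ 1 (and F̄_i(z) = c_i for 0 ≤ z < 1), where α_i > 0 and 0 < c_i ≤ 1. Let F = F_1 ⊗ F_2 be the product distribution on ℝ²_+, so that F̄(x) = 1 − F_1(x_1) F_2(x_2) = F̄_1(x_1) F_2(x_2) + F̄_2(x_2). Then F is weakly subexponential on ℝ²_+: lim_{x⁰→∞} F̄^{*2}(x)/F̄(x) = 2, where x⁰ = min(x_1, x_2) and F^{*2} is the distribution of the sum of two independent F-distributed vectors. -/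
open MeasureTheory Filter Topology
open scoped ENNReal

noncomputable section

/-- Tail of a distribution on `ℝ²` (componentwise order). -/
def tail2 (F : Measure (ℝ × ℝ)) (x : ℝ × ℝ) : ℝ :=
  (F {y : ℝ × ℝ | ¬ (y.1 ≤ x.1 ∧ y.2 ≤ x.2)}).toReal

/-- Convolution: distribution of the sum of two independent `F`-distributed vectors. -/
def conv2 (F : Measure (ℝ × ℝ)) : Measure (ℝ × ℝ) :=
  (F.prod F).map (fun p => p.1 + p.2)

/-- The filter `x⁰ = min(x₁,x₂) → ∞` on `ℝ²`. -/
def minAtTop2 : Filter (ℝ × ℝ) :=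
  Filter.comap (fun x : ℝ × ℝ => min x.1 x.2) Filter.atTop

namespace PPWS

/-- The tail set. -/
lemma tailSet_eq (x : ℝ × ℝ) :
    {y : ℝ × ℝ | ¬ (y.1 ≤ x.1 ∧ y.2 ≤ x.2)} = (Set.Iic x.1 ×ˢ Set.Iic x.2)ᶜ := by
  ext y
  simp only [Set.mem_setOf_eq, Set.mem_compl_iff, Set.mem_prod, Set.mem_Iic]

lemma measurableSet_tailSet (x : ℝ × ℝ) :
    MeasurableSet {y : ℝ × ℝ | ¬ (y.1 ≤ x.1 ∧ y.2 ≤ x.2)} := by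
  rw [tailSet_eq]; exact (measurableSet_Iic.prod measurableSet_Iic).compl

lemma tail2_nonneg (F : Measure (ℝ × ℝ)) (x : ℝ × ℝ) : 0 ≤ tail2 F x :=
  ENNReal.toReal_nonneg

lemma oneDim_Iic (F : Measure ℝ) [IsProbabilityMeasure F] (z : ℝ) :
    (F (Set.Iic z)).toReal = 1 - (F (Set.Ioi z)).toReal := by
  have h : F (Set.Iic z) = 1 - F (Set.Ioi z) := by
    rw [← Set.compl_Ioi, prob_compl_eq_one_sub measurableSet_Ioi]
  rw [h, ENNReal.toReal_sub_of_le prob_le_one (by simp)]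
  simp

lemma tail2_prod_eq (F₁ F₂ : Measure ℝ) [IsProbabilityMeasure F₁] [IsProbabilityMeasure F₂]
    (x : ℝ × ℝ) :
    tail2 (F₁.prod F₂) x
      = 1 - (1 - (F₁ (Set.Ioi x.1)).toReal) * (1 - (F₂ (Set.Ioi x.2)).toReal) := by
  unfold tail2
  rw [tailSet_eq, prob_compl_eq_one_sub (measurableSet_Iic.prod measurableSet_Iic),
    Measure.prod_prod, ENNReal.toReal_sub_of_le (by
      calc F₁ (Set.Iic x.1) * F₂ (Set.Iic x.2) ≤ 1 * 1 :=
        mul_le_mul' prob_le_one prob_le_one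
      _ = 1 := by simp) (by simp), ENNReal.toReal_mul, ENNReal.toReal_one,
    oneDim_Iic, oneDim_Iic]

lemma conv2_tail_eq (μ : Measure (ℝ × ℝ)) [SFinite μ] (x : ℝ × ℝ) :
    tail2 (conv2 μ) x
      = ((μ.prod μ) {p : (ℝ × ℝ) × (ℝ × ℝ) |
          ¬ (p.1.1 + p.2.1 ≤ x.1 ∧ p.1.2 + p.2.2 ≤ x.2)}).toReal := by
  unfold tail2 conv2
  rw [Measure.map_apply measurable_add (measurableSet_tailSet x)]
  congr 1

/-- Lower bound. -/
lemma conv2_tail_lower (μ : Measure (ℝ × ℝ)) [IsProbabilityMeasure μ]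
    (hN : μ {y : ℝ × ℝ | y.1 < 0 ∨ y.2 < 0} = 0) (x : ℝ × ℝ) :
    2 * tail2 μ x - (tail2 μ x) ^ 2 ≤ tail2 (conv2 μ) x := by
  classical
  set S : Set (ℝ × ℝ) := {y : ℝ × ℝ | ¬ (y.1 ≤ x.1 ∧ y.2 ≤ x.2)} with hS
  set N : Set (ℝ × ℝ) := {y : ℝ × ℝ | y.1 < 0 ∨ y.2 < 0} with hNdef
  set P : Set ((ℝ × ℝ) × (ℝ × ℝ)) :=
    {p | ¬ (p.1.1 + p.2.1 ≤ x.1 ∧ p.1.2 + p.2.2 ≤ x.2)} with hP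
  have hμ2 : IsProbabilityMeasure (μ.prod μ) := by infer_instance
  have hBad : (μ.prod μ) ((N ×ˢ Set.univ) ∪ (Set.univ ×ˢ N)) = 0 := by
    apply measure_union_null <;> rw [Measure.prod_prod] <;> simp [hN]
  -- inclusion
  have hincl : (S ×ˢ (Set.univ : Set (ℝ × ℝ))) ∪ ((Set.univ : Set (ℝ × ℝ)) ×ˢ S)
      ⊆ P ∪ ((N ×ˢ Set.univ) ∪ (Set.univ ×ˢ N)) := by
    rintro ⟨a, b⟩ hab
    by_cases hbad : (a, b) ∈ (N ×ˢ Set.univ) ∪ (Set.univ ×ˢ N)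
    · exact Or.inr hbad
    · left
      simp only [hNdef, hS, Set.mem_union, Set.mem_prod, Set.mem_setOf_eq, Set.mem_univ,
        and_true, true_and, not_or, not_lt] at hbad hab ⊢
      obtain ⟨⟨ha1, ha2⟩, hb1, hb2⟩ := hbad
      rintro ⟨h1, h2⟩
      rcases hab with h | h <;> push_neg at h
      · rcases le_or_gt a.1 x.1 with h' | h'
        · exact absurd (h h') (by linarith)
        · linarith
      · rcases le_or_gt b.1 x.1 with h' | h'
        · exact absurd (h h') (by linarith)
        · linarith
  have hSm : MeasurableSet S := measurableSet_tailSet x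
  have hkey : (μ.prod μ) ((S ×ˢ Set.univ) ∪ (Set.univ ×ˢ S)) ≤ (μ.prod μ) P := by
    calc (μ.prod μ) ((S ×ˢ Set.univ) ∪ (Set.univ ×ˢ S))
        ≤ (μ.prod μ) (P ∪ ((N ×ˢ Set.univ) ∪ (Set.univ ×ˢ N))) := measure_mono hincl
      _ ≤ (μ.prod μ) P + (μ.prod μ) ((N ×ˢ Set.univ) ∪ (Set.univ ×ˢ N)) := measure_union_le _ _
      _ = (μ.prod μ) P := by rw [hBad, add_zero]
  -- inclusion-exclusion
  have hinter : (S ×ˢ (Set.univ : Set (ℝ × ℝ))) ∩ ((Set.univ : Set (ℝ × ℝ)) ×ˢ S) = S ×ˢ S := by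
    ext ⟨a, b⟩; simp [Set.mem_prod, and_comm]
  have hie := measure_union_add_inter (μ := μ.prod μ)
    (S ×ˢ (Set.univ : Set (ℝ × ℝ))) (MeasurableSet.prod MeasurableSet.univ hSm)
  rw [hinter] at hie
  have hfin : ∀ T : Set ((ℝ × ℝ) × (ℝ × ℝ)), (μ.prod μ) T ≠ ⊤ := fun T => measure_ne_top _ _
  have htr : ((μ.prod μ) ((S ×ˢ Set.univ) ∪ (Set.univ ×ˢ S))).toReal
      = 2 * tail2 μ x - (tail2 μ x) ^ 2 := by
    have h2 := congrArg ENNReal.toReal hie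
    rw [ENNReal.toReal_add (hfin _) (hfin _), ENNReal.toReal_add (hfin _) (hfin _)] at h2
    have e1 : (μ.prod μ) (S ×ˢ (Set.univ : Set (ℝ × ℝ))) = μ S := by
      rw [Measure.prod_prod]; simp
    have e2 : (μ.prod μ) ((Set.univ : Set (ℝ × ℝ)) ×ˢ S) = μ S := by
      rw [Measure.prod_prod]; simp
    have e3 : ((μ.prod μ) (S ×ˢ S)).toReal = (tail2 μ x) ^ 2 := by
      rw [Measure.prod_prod, ENNReal.toReal_mul]; unfold tail2; rw [← hS]; ring
    rw [e1, e2, e3] at h2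
    unfold tail2 at h2 ⊢
    rw [← hS] at h2 ⊢
    linarith
  rw [conv2_tail_eq, ← hP, ← htr]
  exact ENNReal.toReal_mono (hfin _) hkey

/-- Upper bound. -/
lemma conv2_tail_upper (μ : Measure (ℝ × ℝ)) [IsProbabilityMeasure μ]
    (x x' x'' : ℝ × ℝ) (h1 : x'.1 + x''.1 = x.1) (h2 : x'.2 + x''.2 = x.2) :
    tail2 (conv2 μ) x ≤ 2 * tail2 μ x' + (tail2 μ x'') ^ 2 := by
  classical
  set S' : Set (ℝ × ℝ) := {y : ℝ × ℝ | ¬ (y.1 ≤ x'.1 ∧ y.2 ≤ x'.2)} with hS'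
  set S'' : Set (ℝ × ℝ) := {y : ℝ × ℝ | ¬ (y.1 ≤ x''.1 ∧ y.2 ≤ x''.2)} with hS''
  set P : Set ((ℝ × ℝ) × (ℝ × ℝ)) :=
    {p | ¬ (p.1.1 + p.2.1 ≤ x.1 ∧ p.1.2 + p.2.2 ≤ x.2)} with hP
  have hincl : P ⊆ (S' ×ˢ (Set.univ : Set (ℝ × ℝ))) ∪ ((Set.univ : Set (ℝ × ℝ)) ×ˢ S')
      ∪ (S'' ×ˢ S'') := by
    rintro ⟨a, b⟩ hab
    by_cases hA : a ∈ S'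
    · exact Or.inl (Or.inl (by simp [Set.mem_prod, hA]))
    by_cases hB : b ∈ S'
    · exact Or.inl (Or.inr (by simp [Set.mem_prod, hB]))
    · right
      simp only [hS', Set.mem_setOf_eq, not_not] at hA hB
      obtain ⟨ha1, ha2⟩ := hA
      obtain ⟨hb1, hb2⟩ := hB
      simp only [hP, Set.mem_setOf_eq] at hab
      push_neg at hab
      simp only [Set.mem_prod, hS'', Set.mem_setOf_eq]
      rcases le_or_gt (a.1 + b.1) x.1 with h | h
      · have := hab h
        constructor
        · rintro ⟨q1, q2⟩; linarith
        · rintro ⟨q1, q2⟩; linarith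
      · constructor
        · rintro ⟨q1, q2⟩; linarith
        · rintro ⟨q1, q2⟩; linarith
  have hfin : ∀ T : Set ((ℝ × ℝ) × (ℝ × ℝ)), (μ.prod μ) T ≠ ⊤ := fun T => measure_ne_top _ _
  have hmle : (μ.prod μ) P ≤ μ S' + μ S' + μ S'' * μ S'' := by
    calc (μ.prod μ) P ≤ (μ.prod μ) ((S' ×ˢ Set.univ) ∪ (Set.univ ×ˢ S') ∪ (S'' ×ˢ S'')) :=
        measure_mono hincl
      _ ≤ (μ.prod μ) (S' ×ˢ Set.univ) + (μ.prod μ) (Set.univ ×ˢ S')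
          + (μ.prod μ) (S'' ×ˢ S'') :=
        le_trans (measure_union_le _ _) (by gcongr; exact measure_union_le _ _)
      _ = μ S' + μ S' + μ S'' * μ S'' := by
        rw [Measure.prod_prod, Measure.prod_prod, Measure.prod_prod]; simp
  rw [conv2_tail_eq, ← hP]
  calc ((μ.prod μ) P).toReal ≤ (μ S' + μ S' + μ S'' * μ S'').toReal :=
      ENNReal.toReal_mono (by
        refine ENNReal.add_ne_top.2 ⟨ENNReal.add_ne_top.2 ⟨?_, ?_⟩, ?_⟩ <;>
          first
          | exact measure_ne_top _ _
          | exact ENNReal.mul_ne_top (measure_ne_top _ _) (measure_ne_top _ _)) hmle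
    _ = 2 * tail2 μ x' + (tail2 μ x'') ^ 2 := by
      rw [ENNReal.toReal_add (ENNReal.add_ne_top.2 ⟨measure_ne_top _ _, measure_ne_top _ _⟩)
        (ENNReal.mul_ne_top (measure_ne_top _ _) (measure_ne_top _ _)),
        ENNReal.toReal_add (measure_ne_top _ _) (measure_ne_top _ _), ENNReal.toReal_mul]
      unfold tail2
      rw [← hS', ← hS'']
      ring

end PPWS
end

set_option maxHeartbeats 1000000 in
/-- Example 4.8 of the paper.  The product `F = F₁ ⊗ F₂` of two
Pareto-type marginals with tails `F̄ᵢ(z) = cᵢ (z ∨ 1)^{-1-αᵢ}` for `z ≥ 0` is weakly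
subexponential on `ℝ²_+`: `lim_{x⁰→∞} F̄^{*2}(x)/F̄(x) = 2`. -/
theorem product_pareto_weakly_subexponential
    (α₁ α₂ c₁ c₂ : ℝ) (hα₁ : 0 < α₁) (hα₂ : 0 < α₂)
    (hc₁ : 0 < c₁) (hc₁' : c₁ ≤ 1) (hc₂ : 0 < c₂) (hc₂' : c₂ ≤ 1)
    (F₁ F₂ : Measure ℝ) [IsProbabilityMeasure F₁] [IsProbabilityMeasure F₂]
    (hsupp₁ : F₁ (Set.Iio (0 : ℝ)) = 0) (hsupp₂ : F₂ (Set.Iio (0 : ℝ)) = 0)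
    (htail₁ : ∀ z : ℝ, 0 ≤ z →
      (F₁ (Set.Ioi z)).toReal = c₁ * (max z 1) ^ (-1 - α₁))
    (htail₂ : ∀ z : ℝ, 0 ≤ z →
      (F₂ (Set.Ioi z)).toReal = c₂ * (max z 1) ^ (-1 - α₂)) :
    Filter.Tendsto (fun x => tail2 (conv2 (F₁.prod F₂)) x / tail2 (F₁.prod F₂) x)
      minAtTop2 (nhds 2) := by
  set μ : Measure (ℝ × ℝ) := F₁.prod F₂ with hμ
  have hN : μ {y : ℝ × ℝ | y.1 < 0 ∨ y.2 < 0} = 0 := by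
    have hsub : {y : ℝ × ℝ | y.1 < 0 ∨ y.2 < 0}
        ⊆ (Set.Iio 0 ×ˢ Set.univ) ∪ (Set.univ ×ˢ Set.Iio 0) := by
      rintro ⟨a, b⟩ h
      rcases h with h | h
      · exact Or.inl ⟨h, trivial⟩
      · exact Or.inr ⟨trivial, h⟩
    refine measure_mono_null hsub (measure_union_null ?_ ?_) <;>
      rw [hμ, Measure.prod_prod] <;> simp [hsupp₁, hsupp₂]
  set t₁ : ℝ → ℝ := fun z => c₁ * z ^ (-1 - α₁) with ht₁def
  set t₂ : ℝ → ℝ := fun z => c₂ * z ^ (-1 - α₂) with ht₂def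
  have htail : ∀ y : ℝ × ℝ, 1 ≤ y.1 → 1 ≤ y.2 →
      tail2 μ y = t₁ y.1 + t₂ y.2 - t₁ y.1 * t₂ y.2 := by
    intro y h1 h2
    rw [hμ, PPWS.tail2_prod_eq, htail₁ y.1 (by linarith), htail₂ y.2 (by linarith),
      max_eq_left h1, max_eq_left h2]
    ring
  -- coordinates tend to infinity
  have hm : Filter.Tendsto (fun x : ℝ × ℝ => min x.1 x.2) minAtTop2 Filter.atTop := by
    unfold minAtTop2; exact tendsto_comap
  have hfst : Filter.Tendsto (fun x : ℝ × ℝ => x.1) minAtTop2 Filter.atTop :=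
    tendsto_atTop_mono (fun x => min_le_left _ _) hm
  have hsnd : Filter.Tendsto (fun x : ℝ × ℝ => x.2) minAtTop2 Filter.atTop :=
    tendsto_atTop_mono (fun x => min_le_right _ _) hm
  have hrp : ∀ β : ℝ, 0 < β → Filter.Tendsto (fun z : ℝ => z ^ (-1 - β))
      Filter.atTop (𝓝 0) := by
    intro β hβ
    have := tendsto_rpow_neg_atTop (by linarith : (0:ℝ) < 1 + β)
    have he : (fun z : ℝ => z ^ (-(1 + β))) = fun z : ℝ => z ^ (-1 - β) := by
      funext z; ring_nf
    rwa [he] at this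
  have hu : Filter.Tendsto (fun x : ℝ × ℝ => t₁ x.1) minAtTop2 (𝓝 0) := by
    have := ((hrp α₁ hα₁).comp hfst).const_mul c₁
    simpa [ht₁def, Function.comp] using this
  have hv : Filter.Tendsto (fun x : ℝ × ℝ => t₂ x.2) minAtTop2 (𝓝 0) := by
    have := ((hrp α₂ hα₂).comp hsnd).const_mul c₂
    simpa [ht₂def, Function.comp] using this
  rw [Metric.tendsto_nhds]
  intro δ hδ
  -- choose ε
  obtain ⟨ε, hε0, hε2, hk₁, hk₂⟩ :
      ∃ ε : ℝ, 0 < ε ∧ ε ≤ 1/2 ∧ (1 - ε) ^ (-1 - α₁) < 1 + δ/8 ∧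
        (1 - ε) ^ (-1 - α₂) < 1 + δ/8 := by
    have hcont : ∀ β : ℝ, Filter.Tendsto (fun e : ℝ => (1 - e) ^ (-1 - β)) (𝓝 0) (𝓝 1) := by
      intro β
      have h1 : ContinuousAt (fun y : ℝ => y ^ (-1 - β)) 1 :=
        Real.continuousAt_rpow_const 1 _ (Or.inl one_ne_zero)
      have h2 : Filter.Tendsto (fun e : ℝ => 1 - e) (𝓝 (0:ℝ)) (𝓝 1) := by
        have := (tendsto_const_nhds (x := (1:ℝ)) (f := 𝓝 (0:ℝ))).sub tendsto_id
        simpa using this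
      have := h1.tendsto.comp h2
      simpa [Real.one_rpow, Function.comp_def] using this
    have e1 : ∀ᶠ e : ℝ in 𝓝 0, (1 - e) ^ (-1 - α₁) < 1 + δ/8 :=
      (hcont α₁).eventually_lt_const (by linarith)
    have e2 : ∀ᶠ e : ℝ in 𝓝 0, (1 - e) ^ (-1 - α₂) < 1 + δ/8 :=
      (hcont α₂).eventually_lt_const (by linarith)
    have e3 : ∀ᶠ e : ℝ in 𝓝 (0:ℝ), e < 1/2 :=
      tendsto_id.eventually_lt_const (by norm_num)
    have e4 : ∀ᶠ e : ℝ in 𝓝[>] (0:ℝ), 0 < e := eventually_mem_nhdsWithin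
    have := (e4.and (((e1.and e2).and e3).filter_mono nhdsWithin_le_nhds)).exists
    obtain ⟨e, he0, ⟨he1, he2⟩, he3⟩ := this
    exact ⟨e, he0, le_of_lt he3, he1, he2⟩
  set K : ℝ := 1 + δ/8 with hKdef
  set E : ℝ := max (ε ^ (-1 - α₁)) (ε ^ (-1 - α₂)) with hEdef
  have hK1 : (1:ℝ) ≤ K := by rw [hKdef]; linarith
  -- the comparison function
  have hφ : Filter.Tendsto
      (fun x : ℝ × ℝ => (2*K + E^2 * (t₁ x.1 + t₂ x.2)) / (1 - t₁ x.1))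
      minAtTop2 (𝓝 (2*K)) := by
    have hnum : Filter.Tendsto (fun x : ℝ × ℝ => 2*K + E^2 * (t₁ x.1 + t₂ x.2))
        minAtTop2 (𝓝 (2*K + E^2 * (0 + 0))) :=
      tendsto_const_nhds.add ((hu.add hv).const_mul _)
    have hden : Filter.Tendsto (fun x : ℝ × ℝ => 1 - t₁ x.1) minAtTop2 (𝓝 (1 - 0)) :=
      tendsto_const_nhds.sub hu
    have := hnum.div hden (by norm_num)
    simpa [Pi.div_def] using this
  have evφ : ∀ᶠ x in minAtTop2,
      (2*K + E^2 * (t₁ x.1 + t₂ x.2)) / (1 - t₁ x.1) < 2 + δ :=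
    hφ.eventually_lt_const (by rw [hKdef]; linarith)
  have evu : ∀ᶠ x in minAtTop2, t₁ x.1 < 1/2 := hu.eventually_lt_const (by norm_num)
  have evsum : ∀ᶠ x in minAtTop2, t₁ x.1 + t₂ x.2 < δ := by
    have hsum0 : Filter.Tendsto (fun x : ℝ × ℝ => t₁ x.1 + t₂ x.2) minAtTop2 (𝓝 0) := by
      simpa using hu.add hv
    exact hsum0.eventually_lt_const hδ
  have evreg : ∀ᶠ x in minAtTop2, max 2 (1/ε) ≤ min x.1 x.2 :=
    hm.eventually (Filter.eventually_ge_atTop _)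
  filter_upwards [evφ, evu, evsum, evreg] with x hφx hux hsx hrx
  -- region facts
  have hx1 : 2 ≤ x.1 := le_trans (le_max_left _ _) (hrx.trans (min_le_left _ _))
  have hx2 : 2 ≤ x.2 := le_trans (le_max_left _ _) (hrx.trans (min_le_right _ _))
  have hx1e : 1/ε ≤ x.1 := le_trans (le_max_right _ _) (hrx.trans (min_le_left _ _))
  have hx2e : 1/ε ≤ x.2 := le_trans (le_max_right _ _) (hrx.trans (min_le_right _ _))
  set u : ℝ := t₁ x.1 with hudef
  set v : ℝ := t₂ x.2 with hvdef
  have hupos : 0 < u := mul_pos hc₁ (Real.rpow_pos_of_pos (by linarith) _)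
  have hvpos : 0 < v := mul_pos hc₂ (Real.rpow_pos_of_pos (by linarith) _)
  have hvle1 : v ≤ 1 := by
    have hq : x.2 ^ (-1 - α₂) ≤ 1 :=
      Real.rpow_le_one_of_one_le_of_nonpos (by linarith) (by linarith)
    have hq0 : 0 ≤ x.2 ^ (-1 - α₂) := Real.rpow_nonneg (by linarith) _
    rw [hvdef, ht₂def]
    show c₂ * x.2 ^ (-1 - α₂) ≤ 1
    nlinarith
  have ha : tail2 μ x = u + v - u * v := htail x (by linarith) (by linarith)
  have hapos : 0 < tail2 μ x := by rw [ha]; nlinarith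
  -- lower bound
  have hlow : 2 - (u + v) ≤ tail2 (conv2 μ) x / tail2 μ x := by
    rw [le_div_iff₀ hapos]
    have hcl := PPWS.conv2_tail_lower μ hN x
    rw [ha] at hcl ⊢
    have hA0 : 0 < u + v - u * v := by nlinarith
    have step : (2 - (u + v)) * (u + v - u * v)
        ≤ 2 * (u + v - u * v) - (u + v - u * v) ^ 2 := by
      nlinarith [mul_nonneg hA0.le (mul_nonneg hupos.le hvpos.le)]
    linarith
  -- upper bound
  have hεx1 : 1 ≤ ε * x.1 := by
    rw [div_le_iff₀ hε0] at hx1e; linarith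
  have hεx2 : 1 ≤ ε * x.2 := by
    rw [div_le_iff₀ hε0] at hx2e; linarith
  have h1ε : (0:ℝ) ≤ 1 - ε := by linarith
  have hεx1' : 1 ≤ (1 - ε) * x.1 := by nlinarith
  have hεx2' : 1 ≤ (1 - ε) * x.2 := by nlinarith
  have hup := PPWS.conv2_tail_upper μ x ((1-ε) * x.1, (1-ε) * x.2) (ε * x.1, ε * x.2)
    (by show (1-ε) * x.1 + ε * x.1 = x.1; ring) (by show (1-ε) * x.2 + ε * x.2 = x.2; ring)
  have ha' : tail2 μ ((1-ε) * x.1, (1-ε) * x.2)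
      = (1-ε) ^ (-1 - α₁) * u + (1-ε) ^ (-1 - α₂) * v
        - ((1-ε) ^ (-1 - α₁) * u) * ((1-ε) ^ (-1 - α₂) * v) := by
    rw [htail _ hεx1' hεx2', hudef, hvdef, ht₁def, ht₂def]
    simp only
    rw [Real.mul_rpow h1ε (by linarith : (0:ℝ) ≤ x.1),
      Real.mul_rpow h1ε (by linarith : (0:ℝ) ≤ x.2)]
    ring
  have ha'' : tail2 μ (ε * x.1, ε * x.2)
      = ε ^ (-1 - α₁) * u + ε ^ (-1 - α₂) * v
        - (ε ^ (-1 - α₁) * u) * (ε ^ (-1 - α₂) * v) := by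
    rw [htail _ hεx1 hεx2, hudef, hvdef, ht₁def, ht₂def]
    simp only
    rw [Real.mul_rpow (le_of_lt hε0) (by linarith : (0:ℝ) ≤ x.1),
      Real.mul_rpow (le_of_lt hε0) (by linarith : (0:ℝ) ≤ x.2)]
    ring
  have hk₁0 : (0:ℝ) ≤ (1-ε) ^ (-1 - α₁) := Real.rpow_nonneg h1ε _
  have hk₂0 : (0:ℝ) ≤ (1-ε) ^ (-1 - α₂) := Real.rpow_nonneg h1ε _
  have hE₁ : ε ^ (-1 - α₁) ≤ E := le_max_left _ _
  have hE₂ : ε ^ (-1 - α₂) ≤ E := le_max_right _ _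
  have he₁0 : (0:ℝ) ≤ ε ^ (-1 - α₁) := Real.rpow_nonneg (le_of_lt hε0) _
  have he₂0 : (0:ℝ) ≤ ε ^ (-1 - α₂) := Real.rpow_nonneg (le_of_lt hε0) _
  have ha'le : tail2 μ ((1-ε) * x.1, (1-ε) * x.2) ≤ K * (u + v) := by
    rw [ha']
    have p1 : (1-ε) ^ (-1 - α₁) * u ≤ K * u := mul_le_mul_of_nonneg_right hk₁.le hupos.le
    have p2 : (1-ε) ^ (-1 - α₂) * v ≤ K * v := mul_le_mul_of_nonneg_right hk₂.le hvpos.le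
    have p3 : 0 ≤ ((1-ε) ^ (-1 - α₁) * u) * ((1-ε) ^ (-1 - α₂) * v) :=
      mul_nonneg (mul_nonneg hk₁0 hupos.le) (mul_nonneg hk₂0 hvpos.le)
    nlinarith [p1, p2, p3]
  have ha''le : tail2 μ (ε * x.1, ε * x.2) ≤ E * (u + v) := by
    rw [ha'']
    have p1 : ε ^ (-1 - α₁) * u ≤ E * u := mul_le_mul_of_nonneg_right hE₁ hupos.le
    have p2 : ε ^ (-1 - α₂) * v ≤ E * v := mul_le_mul_of_nonneg_right hE₂ hvpos.le
    have p3 : 0 ≤ (ε ^ (-1 - α₁) * u) * (ε ^ (-1 - α₂) * v) :=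
      mul_nonneg (mul_nonneg he₁0 hupos.le) (mul_nonneg he₂0 hvpos.le)
    nlinarith [p1, p2, p3]
  have hEw0 : 0 ≤ E * (u + v) := by positivity
  have hgB : tail2 (conv2 μ) x ≤ (2*K + E^2 * (u + v)) * (u + v) := by
    calc tail2 (conv2 μ) x ≤ 2 * tail2 μ ((1-ε) * x.1, (1-ε) * x.2) + (tail2 μ (ε * x.1, ε * x.2)) ^ 2 := hup
    _ ≤ 2 * (K * (u + v)) + (E * (u + v)) ^ 2 := by
        gcongr
        exact PPWS.tail2_nonneg _ _
    _ = (2*K + E^2 * (u + v)) * (u + v) := by ring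
  have hwpos : 0 < u + v := by linarith
  have hdenle : (1 - u) * (u + v) ≤ tail2 μ x := by rw [ha]; nlinarith
  have hdenpos : 0 < (1 - u) * (u + v) := by
    apply mul_pos (by linarith) hwpos
  have hupp : tail2 (conv2 μ) x / tail2 μ x < 2 + δ := by
    calc tail2 (conv2 μ) x / tail2 μ x ≤ ((2*K + E^2 * (u + v)) * (u + v)) / tail2 μ x := by
          gcongr
      _ ≤ ((2*K + E^2 * (u + v)) * (u + v)) / ((1 - u) * (u + v)) := by
          exact div_le_div_of_nonneg_left (by positivity) hdenpos hdenle
      _ = (2*K + E^2 * (u + v)) / (1 - u) := by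
          rw [mul_div_mul_right _ _ (ne_of_gt hwpos)]
      _ < 2 + δ := hφx
  rw [Real.dist_eq, abs_lt]
  constructor
  · have h2 : 2 - δ < tail2 (conv2 μ) x / tail2 μ x := by linarith [hlow, hsx]
    linarith
  · linarith [hupp]
end

section
/- Let ϱ ∈ (0,1) and let Ξ be a nonnegative random variable whose distribution H on [0,∞) is subexponential (H̄(z) = 1 − H(z) > 0 for all z and lim_{z→∞} H̄^{*2}(z)/H̄(z) = 2). Let F be the distribution on ℝ²_+ of the vector U = (ϱΞ, (1−ϱ)Ξ). Then the tail of F satisfies F̄(x) = 1 − F(x) = H̄(min(x_1/ϱ, x_2/(1−ϱ))) for x ∈ ℝ²_+, and F is weakly subexponential on ℝ²_+: lim_{x⁰→∞} F̄^{*2}(x)/F̄(x) = 2, where x⁰ = min(x_1, x_2). -/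
open MeasureTheory Filter Topology
open scoped ENNReal

noncomputable section

/-- Convolution of two distributions on `ℝ`. -/
def conv1 (H : Measure ℝ) : Measure ℝ :=
  (H.prod H).map (fun p => p.1 + p.2)

lemma tail2_map (ϱ : ℝ) (hϱ0 : 0 < ϱ) (hϱ1 : ϱ < 1) (μ : Measure ℝ) (x : ℝ × ℝ) :
    tail2 (μ.map (fun ξ : ℝ => (ϱ * ξ, (1 - ϱ) * ξ))) x
      = (μ (Set.Ioi (min (x.1 / ϱ) (x.2 / (1 - ϱ))))).toReal := by
  have h1 : (0:ℝ) < 1 - ϱ := by linarith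
  have hT : Measurable (fun ξ : ℝ => (ϱ * ξ, (1 - ϱ) * ξ)) :=
    (measurable_id.const_mul ϱ).prodMk (measurable_id.const_mul (1 - ϱ))
  have hms : MeasurableSet {y : ℝ × ℝ | ¬ (y.1 ≤ x.1 ∧ y.2 ≤ x.2)} := by
    have : {y : ℝ × ℝ | ¬ (y.1 ≤ x.1 ∧ y.2 ≤ x.2)}
        = (Set.Iic x.1 ×ˢ Set.Iic x.2)ᶜ := by
      ext y
      simp only [Set.mem_setOf_eq, Set.mem_compl_iff, Set.mem_prod, Set.mem_Iic]
    rw [this]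
    exact (measurableSet_Iic.prod measurableSet_Iic).compl
  rw [tail2, Measure.map_apply hT hms]
  have hset : (fun ξ : ℝ => (ϱ * ξ, (1 - ϱ) * ξ)) ⁻¹' {y : ℝ × ℝ | ¬ (y.1 ≤ x.1 ∧ y.2 ≤ x.2)}
      = Set.Ioi (min (x.1 / ϱ) (x.2 / (1 - ϱ))) := by
    ext ξ
    simp only [Set.mem_preimage, Set.mem_setOf_eq, Set.mem_Ioi, not_and_or, not_le,
    min_lt_iff]
    rw [div_lt_iff₀ hϱ0, div_lt_iff₀ h1, mul_comm ξ ϱ, mul_comm ξ (1 - ϱ)]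
  rw [hset]

/-- Example 4.9 of the paper: proportional reinsurance.  If `Ξ` has a
subexponential distribution `H` on `[0,∞)` and `F` is the law of `(ϱΞ, (1-ϱ)Ξ)`, then
`F̄(x) = H̄(min(x₁/ϱ, x₂/(1-ϱ)))` on `ℝ²_+`, and `F` is weakly subexponential:
`lim_{x⁰→∞} F̄^{*2}(x)/F̄(x) = 2`. -/
theorem proportional_split_weakly_subexponential
    (ϱ : ℝ) (hϱ0 : 0 < ϱ) (hϱ1 : ϱ < 1)
    (H : Measure ℝ) [IsProbabilityMeasure H]
    (hsupp : H (Set.Iio (0 : ℝ)) = 0)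
    (hpos : ∀ z : ℝ, 0 < (H (Set.Ioi z)).toReal)
    (hsubexp : Filter.Tendsto
      (fun z : ℝ => ((conv1 H) (Set.Ioi z)).toReal / (H (Set.Ioi z)).toReal)
      Filter.atTop (nhds 2)) :
    (∀ x : ℝ × ℝ, 0 < x.1 → 0 < x.2 →
      tail2 (H.map (fun ξ : ℝ => (ϱ * ξ, (1 - ϱ) * ξ))) x
        = (H (Set.Ioi (min (x.1 / ϱ) (x.2 / (1 - ϱ))))).toReal) ∧
    Filter.Tendsto
      (fun x =>
        tail2 (conv2 (H.map (fun ξ : ℝ => (ϱ * ξ, (1 - ϱ) * ξ)))) x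
          / tail2 (H.map (fun ξ : ℝ => (ϱ * ξ, (1 - ϱ) * ξ))) x)
      minAtTop2 (nhds 2) := by
  have h1 : (0:ℝ) < 1 - ϱ := by linarith
  set T : ℝ → ℝ × ℝ := fun ξ => (ϱ * ξ, (1 - ϱ) * ξ) with hTdef
  have hT : Measurable T :=
    (measurable_id.const_mul ϱ).prodMk (measurable_id.const_mul (1 - ϱ))
  have hadd2 : Measurable (fun p : (ℝ × ℝ) × (ℝ × ℝ) => p.1 + p.2) :=
    measurable_fst.add measurable_snd
  have hadd1 : Measurable (fun p : ℝ × ℝ => p.1 + p.2) :=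
    measurable_fst.add measurable_snd
  -- conv2 (H.map T) = (conv1 H).map T
  have hconv : conv2 (H.map T) = (conv1 H).map T := by
    rw [conv2, conv1]
    have hprod : (H.map T).prod (H.map T) = (H.prod H).map (Prod.map T T) := by
      rw [← Measure.map_prod_map _ _ hT hT]
    rw [hprod, Measure.map_map hadd2 (hT.prodMap hT),
      Measure.map_map hT hadd1]
    congr 1
    funext p
    simp only [Function.comp_apply, Prod.map, hTdef, Prod.mk_add_mk, Prod.ext_iff]
    constructor <;> ring
  refine ⟨fun x _ _ => tail2_map ϱ hϱ0 hϱ1 H x, ?_⟩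
  have hmin : Tendsto (fun x : ℝ × ℝ => min (x.1 / ϱ) (x.2 / (1 - ϱ)))
      minAtTop2 atTop := by
    have hbase : Tendsto (fun x : ℝ × ℝ => min x.1 x.2) minAtTop2 atTop :=
      tendsto_comap
    apply tendsto_atTop_mono' _ _ hbase
    filter_upwards [hbase.eventually_ge_atTop 0] with x hx
    have hx1 : 0 ≤ x.1 := le_trans hx (min_le_left _ _)
    have hx2 : 0 ≤ x.2 := le_trans hx (min_le_right _ _)
    have e1 : x.1 ≤ x.1 / ϱ := by
      rw [le_div_iff₀ hϱ0]; nlinarith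
    have e2 : x.2 ≤ x.2 / (1 - ϱ) := by
      rw [le_div_iff₀ h1]; nlinarith
    exact le_min (le_trans (min_le_left _ _) e1) (le_trans (min_le_right _ _) e2)
  have := hsubexp.comp hmin
  refine this.congr (fun x => ?_)
  simp only [Function.comp_apply]
  rw [hconv, tail2_map ϱ hϱ0 hϱ1 (conv1 H) x, tail2_map ϱ hϱ0 hϱ1 H x]

end
end
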